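/- Let m ≥ 3 be odd with s = max{v₂(m+1), v₂(m−1)}. Then for every n ≥ 2 and every odd t ∈ ℤ₂, the 2-adic valuation of T_m(1 + 2^n t) − (1 + 2^n t) equals s + n + 1. -/

import Mathlib

open Polynomial Polynomial.Chebyshev

variable (R : Type*) [CommRing R]

theorem myT_sub_T (a b : ℤ) :
    T R (a + b) - T R (a - b) = 2 * (X ^ 2 - 1) * U R (a - 1) * U R (b - 1) := by
  induction b using Polynomial.Chebyshev.induct with
  | zero => simp
  | one =>
    have h1 := T_eq_X_mul_T_sub_pol_U R (a - 1)
    have h2 := T_sub_one R a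
    linear_combination (norm := (ring_nf; try simp [T_two, U_one, U_zero, U_neg_one]; try ring_nf))
      2 * h1 - h2
  | add_two b ih1 ih2 =>
    have h1 := T_add_two R (a + b)
    have h2 := T_sub_two R (a - b)
    have h3 := U_add_two R (b - 1)
    linear_combination (norm := (ring_nf; try simp [T_two, U_one, U_zero, U_neg_one]; try ring_nf))
      h1 - h2 + 2 * X * ih1 - ih2 - 2 * (X ^ 2 - 1) * U R (a - 1) * h3
  | neg_add_one b ih1 ih2 =>
    have h1 := T_add_two R (a - b - 1)
    have h2 := T_add_two R (a + b - 1)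
    have h3 := U_add_two R (-b - 2)
    linear_combination (norm := (ring_nf; try simp [T_two, U_one, U_zero, U_neg_one]; try ring_nf))
      h1 - h2 + 2 * X * ih1 - ih2 - 2 * (X ^ 2 - 1) * U R (a - 1) * h3

theorem myU_add (a b : ℤ) :
    U R (a + b + 1) = U R a * T R (b + 1) + T R (a + 1) * U R b := by
  induction b using Polynomial.Chebyshev.induct with
  | zero =>
    have h2 := U_eq_X_mul_U_add_T R a
    linear_combination (norm := (ring_nf; try simp [T_two, T_one, U_one, U_zero, U_neg_one]; try ring_nf)) h2
  | one =>
    have h1 := U_add_two R a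
    have h2 := U_eq_X_mul_U_add_T R a
    linear_combination (norm := (ring_nf; try simp [T_two, U_one, U_zero, U_neg_one]; try ring_nf))
      h1 + 2 * X * h2
  | add_two b ih1 ih2 =>
    have h1 := U_add_two R (a + b + 1)
    have h2 := T_add_two R (b + 1)
    have h3 := U_add_two R b
    linear_combination (norm := (ring_nf; try simp [T_two, U_one, U_zero, U_neg_one]; try ring_nf))
      h1 + 2 * X * ih1 - ih2 - U R a * h2 - T R (a + 1) * h3
  | neg_add_one b ih1 ih2 =>
    have h1 := U_add_two R (a - b)
    have h2 := T_add_two R (-b)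
    have h3 := U_add_two R (-b - 1)
    linear_combination (norm := (ring_nf; try simp [T_two, U_one, U_zero, U_neg_one]; try ring_nf))
      h1 - U R a * h2 - T R (a + 1) * h3 + 2 * X * ih1 - ih2


theorem myT_eval_one : ∀ j : ℤ, (T R j).eval 1 = 1 := by
  intro j
  induction j using Polynomial.Chebyshev.induct with
  | zero => simp
  | one => simp
  | add_two b ih1 ih2 => rw [T_add_two]; simp [ih1, ih2]; norm_num
  | neg_add_one b ih1 ih2 =>
    rw [T_sub_one R (-(b:ℤ))]
    simp only [T_neg] at ih1
    simp [ih1, ih2]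
    norm_num

theorem myU_eval_one : ∀ j : ℤ, (U R j).eval 1 = (j : R) + 1 := by
  intro j
  induction j using Polynomial.Chebyshev.induct with
  | zero => simp
  | one => simp [U_one]; norm_num
  | add_two b ih1 ih2 =>
    rw [U_add_two]
    simp [ih1, ih2]
    push_cast
    ring
  | neg_add_one b ih1 ih2 =>
    rw [U_sub_one R (-(b:ℤ))]
    simp [ih1, ih2]
    push_cast
    ring

lemma isUnit_of_two_dvd_sub_one {z : ℤ_[2]} (h : (2 : ℤ_[2]) ∣ z - 1) : IsUnit z := by
  by_contra hz
  rw [PadicInt.not_isUnit_iff, PadicInt.norm_lt_one_iff_dvd] at hz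
  have h1 : ((2:ℕ) : ℤ_[2]) ∣ z - (z - 1) := dvd_sub (by exact_mod_cast hz) (by exact_mod_cast h)
  simp only [sub_sub_cancel] at h1
  rw [← PadicInt.norm_lt_one_iff_dvd] at h1
  simp at h1

lemma val_eq_zero_of_isUnit {z : ℤ_[2]} (h : IsUnit z) : z.valuation = 0 := by
  have h1 : ‖z‖ = 1 := PadicInt.isUnit_iff.mp h
  have hz : z ≠ 0 := by intro e; rw [e] at h1; simp at h1
  by_contra hv
  have hge : (1 : ℤ) ≤ z.valuation := by
    have := Int.natCast_nonneg z.valuation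
    omega
  have h2 := (PadicInt.norm_le_pow_iff_le_valuation z hz 1).mpr (by exact_mod_cast hge)
  rw [h1] at h2
  norm_num at h2

lemma val_two_pow_mul (k : ℕ) {u : ℤ_[2]} (hu : IsUnit u) :
    ((2 : ℤ_[2]) ^ k * u).valuation = k := by
  have h2 : ((2:ℕ) : ℤ_[2]) = (2 : ℤ_[2]) := by norm_num
  rw [← h2, PadicInt.valuation_p_pow_mul k u hu.ne_zero, val_eq_zero_of_isUnit hu, add_zero]

lemma valU (x : ℤ_[2]) (hx : (2:ℤ_[2]) ∣ x - 1) :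
    ∀ b : ℕ, ∃ u : ℤ_[2], IsUnit u ∧
      (U ℤ_[2] (b:ℤ)).eval x = 2 ^ (padicValNat 2 (b+1)) * u := by
  intro b
  induction b using Nat.strong_induction_on with
  | _ b ih =>
    rcases Nat.even_or_odd b with he | ho
    · have hodd : ¬ 2 ∣ (b+1) := by
        obtain ⟨c, hc⟩ := he; omega
      have hv : padicValNat 2 (b+1) = 0 := padicValNat.eq_zero_of_not_dvd hodd
      refine ⟨(U ℤ_[2] (b:ℤ)).eval x, ?_, by rw [hv, pow_zero, one_mul]⟩
      apply isUnit_of_two_dvd_sub_one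
      have h1 : x - 1 ∣ (U ℤ_[2] (b:ℤ)).eval x - (U ℤ_[2] (b:ℤ)).eval 1 :=
        Polynomial.sub_dvd_eval_sub x 1 _
      have h2 : (U ℤ_[2] (b:ℤ)).eval 1 = (b:ℤ_[2]) + 1 := by
        rw [myU_eval_one]; push_cast; ring
      have h3 : (2:ℤ_[2]) ∣ (b:ℤ_[2]) := by
        obtain ⟨c, rfl⟩ := he
        push_cast
        exact ⟨(c:ℤ_[2]), by ring⟩
      have h4 : (U ℤ_[2] (b:ℤ)).eval x - 1
          = ((U ℤ_[2] (b:ℤ)).eval x - (U ℤ_[2] (b:ℤ)).eval 1) + (b:ℤ_[2]) := by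
        rw [h2]; ring
      rw [h4]
      exact dvd_add (hx.trans h1) h3
    · obtain ⟨c, rfl⟩ := ho
      have hid := myU_add ℤ_[2] (c:ℤ) (c:ℤ)
      obtain ⟨u, hu, hU⟩ := ih c (by omega)
      have hT : IsUnit ((T ℤ_[2] ((c:ℤ)+1)).eval x) := by
        apply isUnit_of_two_dvd_sub_one
        have h1 := Polynomial.sub_dvd_eval_sub x 1 (T ℤ_[2] ((c:ℤ)+1))
        rw [myT_eval_one] at h1
        exact hx.trans h1
      refine ⟨(T ℤ_[2] ((c:ℤ)+1)).eval x * u, hT.mul hu, ?_⟩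
      have hidx : ((2*c+1 : ℕ) : ℤ) = (c:ℤ) + (c:ℤ) + 1 := by push_cast; ring
      have hv : padicValNat 2 (2*c+1+1) = padicValNat 2 (c+1) + 1 := by
        have h5 : 2*c+1+1 = 2*(c+1) := by ring
        rw [h5, padicValNat.mul (by norm_num) (by omega), padicValNat.self (by norm_num)]
        ring
      have heval : (U ℤ_[2] ((c:ℤ)+(c:ℤ)+1)).eval x
          = 2 * (T ℤ_[2] ((c:ℤ)+1)).eval x * (U ℤ_[2] (c:ℤ)).eval x := by
        rw [hid]; simp; ring
      rw [hidx, heval, hU, hv, pow_succ]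
      ring

lemma isUnit_of_not_two_dvd {z : ℤ_[2]} (h : ¬ (2:ℤ_[2]) ∣ z) : IsUnit z := by
  rw [PadicInt.isUnit_iff]
  have h1 : ¬ ‖z‖ < 1 := by
    rw [PadicInt.norm_lt_one_iff_dvd]
    exact_mod_cast h
  have h2 := PadicInt.norm_le_one z
  linarith [lt_or_eq_of_le h2]

theorem chebyshev_valuation_near_one (m : ℕ) (hm : 3 ≤ m) (hodd : Odd m)
    (s : ℕ) (hs : s = max (padicValNat 2 (m + 1)) (padicValNat 2 (m - 1)))
    (n : ℕ) (hn : 2 ≤ n) (t : ℤ_[2]) (ht : ¬ (2 : ℤ_[2]) ∣ t) :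
    ((Polynomial.Chebyshev.T ℤ_[2] m).eval (1 + 2 ^ n * t) - (1 + 2 ^ n * t)).valuation
      = (s : ℤ) + (n : ℤ) + 1 := by
  obtain ⟨b, hb⟩ := hodd
  obtain ⟨n', rfl⟩ : ∃ n', n = n' + 2 := ⟨n - 2, by omega⟩
  have hb1 : 1 ≤ b := by omega
  set x : ℤ_[2] := 1 + 2 ^ (n' + 2) * t with hxdef
  have hx : (2:ℤ_[2]) ∣ x - 1 := ⟨2 ^ (n' + 1) * t, by rw [hxdef]; ring⟩
  -- the key identity
  have hmz : (m : ℤ) = ((b:ℤ)+1) + (b:ℤ) := by omega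
  have hid := myT_sub_T ℤ_[2] ((b:ℤ)+1) (b:ℤ)
  have hsub : ((b:ℤ)+1) - (b:ℤ) = 1 := by ring
  rw [hsub, ← hmz] at hid
  have hkey : (T ℤ_[2] (m:ℤ)).eval x - x
      = 2 * (x^2 - 1) * (U ℤ_[2] (b:ℤ)).eval x * (U ℤ_[2] ((b:ℤ)-1)).eval x := by
    have := congrArg (Polynomial.eval x) hid
    simpa [T_one, add_sub_cancel_right] using this
  -- factor x^2 - 1
  have hfac : x^2 - 1 = 2^(n'+3) * (t * (1 + 2^(n'+1) * t)) := by
    rw [hxdef]; ring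
  have hu0 : IsUnit (t * (1 + 2^(n'+1) * t)) := by
    refine (isUnit_of_not_two_dvd ht).mul (isUnit_of_two_dvd_sub_one ?_)
    exact ⟨2^n' * t, by ring⟩
  -- U values
  obtain ⟨u1, hu1, hU1⟩ := valU x hx b
  obtain ⟨u2, hu2, hU2⟩ := valU x hx (b-1)
  have hcast : (((b-1 : ℕ)) : ℤ) = (b:ℤ) - 1 := by omega
  have hb1' : b - 1 + 1 = b := by omega
  rw [hcast, hb1'] at hU2
  -- combine
  set v1 := padicValNat 2 (b+1) with hv1
  set v0 := padicValNat 2 b with hv0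
  have htotal : (T ℤ_[2] (m:ℤ)).eval x - x
      = 2 ^ (1 + (n'+3) + v1 + v0) * ((t * (1 + 2^(n'+1) * t)) * u1 * u2) := by
    rw [hkey, hfac, hU1, hU2]; ring
  have hval := val_two_pow_mul (1 + (n'+3) + v1 + v0) ((hu0.mul hu1).mul hu2)
  rw [htotal, hval]
  -- arithmetic: s = v0 + v1 + 1
  have hm1 : m + 1 = 2 * (b + 1) := by omega
  have hm2 : m - 1 = 2 * b := by omega
  have hvm1 : padicValNat 2 (m+1) = 1 + v1 := by
    rw [hm1, padicValNat.mul (by norm_num) (by omega), padicValNat.self (by norm_num)]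
  have hvm2 : padicValNat 2 (m-1) = 1 + v0 := by
    rw [hm2, padicValNat.mul (by norm_num) (by omega), padicValNat.self (by norm_num)]
  have hs' : s = v0 + v1 + 1 := by
    rcases Nat.even_or_odd b with he | ho
    · have h1 : v1 = 0 := padicValNat.eq_zero_of_not_dvd (by obtain ⟨c, hc⟩ := he; omega)
      have h0 : 1 ≤ v0 := by
        obtain ⟨c, hc⟩ := he
        have : b = 2 * c := by omega
        rw [hv0, this, padicValNat.mul (by norm_num) (by omega),
          padicValNat.self (by norm_num)]
        omega
      rw [hs, hvm1, hvm2, h1]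
      omega
    · have h0 : v0 = 0 := padicValNat.eq_zero_of_not_dvd (by obtain ⟨c, hc⟩ := ho; omega)
      have h1 : 1 ≤ v1 := by
        obtain ⟨c, hc⟩ := ho
        have : b + 1 = 2 * (c+1) := by omega
        rw [hv1, this, padicValNat.mul (by norm_num) (by omega),
          padicValNat.self (by norm_num)]
        omega
      rw [hs, hvm1, hvm2, h0]
      omega
  push_cast [hs']
  ring
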